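/- In a triangulated category, suppose given triangles A₀ → ⊕_{i=1}^d Aᵢ → C and Σ⁻¹cone(f_k) → A₀ → A_k → cone(f_k) where f_k is the k-th component of the first map. Then there is a triangle Σ⁻¹cone(f_k) → ⊕_{i≠k} Aᵢ → C → cone(f_k), i.e., C is also the cone of an induced morphism Σ⁻¹cone(f_k) → ⊕_{i≠k} Aᵢ. -/

import Mathlib

open CategoryTheory Limits Pretriangulated

/-- Octahedral rearrangement: given triangles `A₀ →f ⊕ᵢ Aᵢ →g Cn →h ΣA₀` and
`A₀ →f_k A_k →u Cfk →v ΣA₀` (where `f_k = f ≫ π_k`), there is a distinguished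
triangle `Σ⁻¹Cfk → ⊕_{i ≠ k} Aᵢ → Cn → Cfk`, i.e. `Cn` is also the cone of an induced
morphism `Σ⁻¹ cone(f_k) → ⊕_{i ≠ k} Aᵢ`. -/
theorem octahedral_cone_rearrangement {C : Type*} [Category C] [HasZeroObject C]
    [Preadditive C] [HasShift C ℤ] [∀ n : ℤ, (shiftFunctor C n).Additive]
    [Pretriangulated C] [IsTriangulated C] [HasFiniteBiproducts C]
    (d : ℕ) (A₀ : C) (A : Fin d → C) (f : A₀ ⟶ ⨁ A) (k : Fin d)
    (Cn : C) (g : ⨁ A ⟶ Cn) (h : Cn ⟶ A₀⟦(1:ℤ)⟧)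
    (hT : Triangle.mk f g h ∈ (distTriang C))
    (Cfk : C) (u : A k ⟶ Cfk) (v : Cfk ⟶ A₀⟦(1:ℤ)⟧)
    (hT' : Triangle.mk (f ≫ biproduct.π A k) u v ∈ (distTriang C)) :
    ∃ (a : (Cfk⟦(-1:ℤ)⟧) ⟶ ⨁ Subtype.restrict (fun i => i ≠ k) A)
      (b : (⨁ Subtype.restrict (fun i => i ≠ k) A) ⟶ Cn)
      (c : Cn ⟶ (Cfk⟦(-1:ℤ)⟧)⟦(1:ℤ)⟧),
      Triangle.mk a b c ∈ (distTriang C) := by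
  classical
  set p : Fin d → Prop := fun i => i ≠ k with hp
  set R : C := ⨁ Subtype.restrict p A with hR
  have hpk : ¬ p k := by simp [p]
  -- the iso between `R ⊞ A k` and `⨁ A`
  let φ : R ⊞ A k ≅ ⨁ A :=
    { hom := biprod.desc (biproduct.fromSubtype A p) (biproduct.ι A k)
      inv := biprod.lift (biproduct.toSubtype A p) (biproduct.π A k)
      hom_inv_id := by
        refine biprod.hom_ext' _ _ ?_ ?_ <;> refine biprod.hom_ext _ _ ?_ ?_
        · simp [R]
        · simp [R, biproduct.fromSubtype_π, hpk]
        · simp [hpk]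
        · simp [R]
      inv_hom_id := by
        refine biproduct.hom_ext' _ _ fun j => ?_
        by_cases hj : j = k
        · subst hj
          simp [hpk, biproduct.ι_π]
        · have hj' : p j := hj
          simp [p, hj, biproduct.ι_π, dif_neg hj] }
  -- the distinguished triangle `R → ⨁ A → A k → R⟦1⟧`
  have hT₁ : Triangle.mk (biproduct.fromSubtype A p) (biproduct.π A k)
      (0 : A k ⟶ R⟦(1:ℤ)⟧) ∈ distTriang C := by
    refine isomorphic_distinguished _ (binaryBiproductTriangle_distinguished R (A k)) _ ?_
    refine Triangle.isoMk _ _ (Iso.refl _) φ.symm (Iso.refl _) ?_ ?_ ?_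
    · dsimp [φ]
      refine biprod.hom_ext _ _ ?_ ?_
      · simp +zetaDelta [Triangle.mk, binaryBiproductTriangle]
      · simp +zetaDelta [Triangle.mk, binaryBiproductTriangle, biproduct.fromSubtype_π, hpk]
    · dsimp [φ]
      simp +zetaDelta [Triangle.mk, binaryBiproductTriangle]
    · simp +zetaDelta [Triangle.mk, binaryBiproductTriangle]
  -- rotate it to get a distinguished triangle starting with `π k`
  have hT₂ : Triangle.mk (biproduct.π A k) (0 : A k ⟶ R⟦(1:ℤ)⟧)
      (-(biproduct.fromSubtype A p)⟦(1:ℤ)⟧') ∈ distTriang C := rot_of_distTriang _ hT₁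
  -- apply the octahedron axiom to `f ≫ π k`
  have H := Triangulated.someOctahedron (u₁₂ := f) (u₂₃ := biproduct.π A k)
    (u₁₃ := f ≫ biproduct.π A k) rfl hT hT₂ hT'
  have hmem := H.mem
  have hT₃ := inv_rot_of_distTriang _ (inv_rot_of_distTriang _ hmem)
  set T := ((Triangle.mk H.m₁ H.m₃
    ((-(biproduct.fromSubtype A p)⟦(1:ℤ)⟧') ≫ g⟦(1:ℤ)⟧')).invRotate).invRotate with hTdef
  have hT₃' : T ∈ distTriang C := hT₃
  -- fix up the middle object using the shift compatibility iso
  let ε : (R⟦(1:ℤ)⟧)⟦(-1:ℤ)⟧ ≅ R :=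
    (shiftFunctorCompIsoId C (1:ℤ) (-1:ℤ) (by omega)).app R
  refine ⟨T.mor₁ ≫ ε.hom, ε.inv ≫ T.mor₂, T.mor₃, ?_⟩
  refine isomorphic_distinguished _ hT₃' _ ?_
  refine Triangle.isoMk _ _ (Iso.refl _) ε.symm (Iso.refl _) ?_ ?_ ?_
  · simp +zetaDelta [Triangle.mk, Triangle.invRotate]
  · simp +zetaDelta [Triangle.mk, Triangle.invRotate]
  · simp +zetaDelta [Triangle.mk, Triangle.invRotate]
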